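/- Let n be a positive even integer and let X be a random variable taking values in {0,1}^n whose joint distribution is (n/2)-wise independent. Then the support of X has size at least 2^n/(n+1). -/
import Mathlib


/-- `p` is the probability mass function of a `k`-wise independent random variable
taking values in `{0,1}^n`. -/
def KWiseIndep (n k : ℕ) (p : (Fin n → Bool) → ℝ) : Prop :=
  ∀ S : Finset (Fin n), S.card ≤ k → ∀ a : Fin n → Bool,
    (∑ x ∈ Finset.univ.filter fun x => ∀ i ∈ S, x i = a i, p x) = (1 / 2 : ℝ) ^ S.card

open Finset

/-- The character `χ_S`. -/
noncomputable def kwChi {n : ℕ} (S : Finset (Fin n)) (x : Fin n → Bool) : ℝ :=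
  ∏ i ∈ S, (if x i then -1 else 1)

/-- The Fourier coefficient (times `2^n`). -/
noncomputable def kwP {n : ℕ} (p : (Fin n → Bool) → ℝ) (S : Finset (Fin n)) : ℝ :=
  ∑ x, p x * kwChi S x

lemma kw_sum_powerset_prod {n : ℕ} (s : Finset (Fin n)) (f : Fin n → ℝ) :
    ∑ t ∈ s.powerset, ∏ i ∈ t, f i = ∏ i ∈ s, (f i + 1) := by
  rw [Finset.prod_add]
  simp

lemma kw_sum_prod {n : ℕ} (f : Fin n → ℝ) :
    ∑ S : Finset (Fin n), ∏ i ∈ S, f i = ∏ i, (f i + 1) := by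
  rw [← Finset.powerset_univ, kw_sum_powerset_prod]

lemma kw_pick {n : ℕ} (f : Fin n → ℝ) (i : Fin n) :
    ∑ S : Finset (Fin n), (if i ∈ S then ∏ j ∈ S, f j else 0)
      = f i * ∏ j ∈ Finset.univ.erase i, (f j + 1) := by
  have h1 : (Finset.univ : Finset (Fin n)) = insert i (Finset.univ.erase i) := by
    simp
  rw [← Finset.powerset_univ, h1,
    Finset.sum_powerset_insert (Finset.notMem_erase i _)]
  have h2 : ∑ t ∈ (Finset.univ.erase i).powerset,
      (if i ∈ t then ∏ j ∈ t, f j else 0) = 0 := by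
    apply Finset.sum_eq_zero
    intro t ht
    rw [Finset.mem_powerset] at ht
    have : i ∉ t := fun hi => Finset.notMem_erase i _ (ht hi)
    simp [this]
  rw [h2, zero_add]
  have h3 : ∀ t ∈ (Finset.univ.erase i).powerset,
      (if i ∈ insert i t then ∏ j ∈ insert i t, f j else 0) = f i * ∏ j ∈ t, f j := by
    intro t ht
    rw [Finset.mem_powerset] at ht
    have hit : i ∉ t := fun hi => Finset.notMem_erase i _ (ht hi)
    rw [if_pos (Finset.mem_insert_self i t), Finset.prod_insert hit]
  rw [Finset.sum_congr rfl h3, ← Finset.mul_sum, kw_sum_powerset_prod]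
  rw [← h1]

lemma kw_chi_mul {n : ℕ} (S : Finset (Fin n)) (x y : Fin n → Bool) :
    kwChi S x * kwChi S y = ∏ i ∈ S, (if x i = y i then (1 : ℝ) else -1) := by
  rw [kwChi, kwChi, ← Finset.prod_mul_distrib]
  apply Finset.prod_congr rfl
  intro i _
  cases hx : x i <;> cases hy : y i <;> simp [hx, hy]

/-- Independence kills low-order nonempty Fourier coefficients. -/
lemma kw_vanish {n : ℕ} (p : (Fin n → Bool) → ℝ) (k : ℕ) (hindep : KWiseIndep n k p)
    (S : Finset (Fin n)) (hS : S.Nonempty) (hcard : S.card ≤ k) :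
    kwP p S = 0 := by
  have hchi : ∀ x : Fin n → Bool, kwChi S x
      = ∑ T ∈ S.powerset, (-2 : ℝ) ^ T.card * ∏ i ∈ T, (if x i then (1:ℝ) else 0) := by
    intro x
    have : kwChi S x = ∏ i ∈ S, ((if x i then (-2:ℝ) else 0) + 1) := by
      rw [kwChi]
      apply Finset.prod_congr rfl
      intro i _
      cases hx : x i <;> norm_num [hx]
    rw [this, Finset.prod_add]
    apply Finset.sum_congr rfl
    intro T _
    have : ∏ i ∈ T, (if x i then (-2:ℝ) else 0)
        = ∏ i ∈ T, ((-2 : ℝ) * (if x i then (1:ℝ) else 0)) := by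
      apply Finset.prod_congr rfl
      intro i _
      cases hx : x i <;> simp [hx]
    rw [this, Finset.prod_mul_distrib, Finset.prod_const]
    simp
  have key : kwP p S = ∑ T ∈ S.powerset, (-2 : ℝ) ^ T.card *
      ∑ x, p x * ∏ i ∈ T, (if x i then (1:ℝ) else 0) := by
    rw [kwP]
    have hstep : ∀ x : Fin n → Bool, p x * kwChi S x
        = ∑ T ∈ S.powerset, (-2:ℝ)^T.card *
          (p x * ∏ i ∈ T, (if x i then (1:ℝ) else 0)) := by
      intro x
      rw [hchi x, Finset.mul_sum]
      exact Finset.sum_congr rfl fun T _ => by ring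
    rw [Finset.sum_congr rfl fun x _ => hstep x, Finset.sum_comm]
    exact Finset.sum_congr rfl fun T _ => by rw [Finset.mul_sum]
  have hprob : ∀ T ∈ S.powerset,
      (∑ x, p x * ∏ i ∈ T, (if x i then (1:ℝ) else 0)) = (1/2 : ℝ) ^ T.card := by
    intro T hT
    rw [Finset.mem_powerset] at hT
    have hTc : T.card ≤ k := le_trans (Finset.card_le_card hT) hcard
    have := hindep T hTc (fun _ => true)
    rw [← this]
    rw [Finset.sum_filter]
    apply Finset.sum_congr rfl
    intro x _
    rw [Finset.prod_boole]
    by_cases h : ∀ i ∈ T, x i = true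
    · simp [h]
    · simp [h]
  rw [key, Finset.sum_congr rfl (fun T hT => by rw [hprob T hT])]
  have : ∀ T ∈ S.powerset, (-2 : ℝ) ^ T.card * (1/2 : ℝ) ^ T.card
      = ∏ i ∈ T, (-1 : ℝ) := by
    intro T _
    rw [Finset.prod_const, ← mul_pow]
    norm_num
  rw [Finset.sum_congr rfl this]
  have := kw_sum_powerset_prod S (fun _ => (-1 : ℝ))
  rw [this]
  simp only [neg_add_cancel]
  rw [Finset.prod_const]
  exact zero_pow (by simpa [Finset.card_eq_zero] using hS.ne_empty)

/-- If `X` is an `(n/2)`-wise independent random variable on `{0,1}^n` (`n` positive and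
even), then its support has size at least `2^n/(n+1)`. -/
theorem support_of_half_wise_indep (n : ℕ) (hn : 0 < n) (heven : Even n)
    (p : (Fin n → Bool) → ℝ) (hp0 : ∀ x, 0 ≤ p x) (hp1 : ∑ x, p x = 1)
    (hindep : KWiseIndep n (n / 2) p) :
    ((Finset.univ.filter fun x => 0 < p x).card : ℝ) ≥ 2 ^ n / ((n : ℝ) + 1) := by
  classical
  set m := n / 2 with hm
  have hmm : m + m = n := by
    have := Nat.div_two_mul_two_of_even heven
    omega
  set C : ℝ := ∑ x, (p x) ^ 2 with hC
  have hC0 : 0 ≤ C := Finset.sum_nonneg fun x _ => sq_nonneg _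
  -- epsilon kernel
  set eps : (Fin n → Bool) → (Fin n → Bool) → Fin n → ℝ :=
    fun x y i => if x i = y i then 1 else -1 with heps
  -- square expansion
  have hsq : ∀ S : Finset (Fin n), (kwP p S) ^ 2
      = ∑ x, ∑ y, p x * p y * ∏ i ∈ S, eps x y i := by
    intro S
    rw [sq, kwP, Finset.sum_mul_sum]
    apply Finset.sum_congr rfl; intro x _
    apply Finset.sum_congr rfl; intro y _
    rw [mul_mul_mul_comm, kw_chi_mul]
  -- Parseval
  have parseval : ∑ S : Finset (Fin n), (kwP p S) ^ 2 = 2 ^ n * C := by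
    simp_rw [hsq]
    rw [Finset.sum_comm]
    have : ∀ x : Fin n → Bool, ∑ S : Finset (Fin n), ∑ y, p x * p y * ∏ i ∈ S, eps x y i
        = 2 ^ n * (p x) ^ 2 := by
      intro x
      rw [Finset.sum_comm]
      have hker : ∀ y : Fin n → Bool, ∑ S : Finset (Fin n), ∏ i ∈ S, eps x y i
          = if x = y then (2:ℝ) ^ n else 0 := by
        intro y
        rw [kw_sum_prod]
        by_cases hxy : x = y
        · subst hxy
          rw [if_pos rfl]
          have : ∀ i ∈ Finset.univ, eps x x i + 1 = 2 := by
            intro i _; norm_num [heps]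
          rw [Finset.prod_congr rfl this, Finset.prod_const]
          simp
        · rw [if_neg hxy]
          have : ∃ i, x i ≠ y i := by
            by_contra h
            push_neg at h
            exact hxy (funext h)
          obtain ⟨i, hi⟩ := this
          apply Finset.prod_eq_zero (Finset.mem_univ i)
          simp [heps, hi]
      have : ∀ y : Fin n → Bool,
          ∑ S : Finset (Fin n), p x * p y * ∏ i ∈ S, eps x y i
          = (if x = y then p x * p y * (2:ℝ)^n else 0) := by
        intro y
        rw [← Finset.mul_sum, hker y]
        split_ifs <;> simp
      rw [Finset.sum_congr rfl (fun y _ => this y)]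
      rw [Finset.sum_ite_eq (Finset.univ) x (fun y => p x * p y * 2 ^ n)]
      simp [sq]
      ring
    rw [Finset.sum_congr rfl (fun x _ => this x), ← Finset.mul_sum]
  -- degree-weighted bound
  have degbound : ∑ S : Finset (Fin n), (S.card : ℝ) * (kwP p S) ^ 2
      ≤ (m : ℝ) * (2 ^ n * C) := by
    have hsplit : ∑ S : Finset (Fin n), (S.card : ℝ) * (kwP p S) ^ 2
        = ∑ i : Fin n, ∑ S : Finset (Fin n), (if i ∈ S then (kwP p S)^2 else 0) := by
      rw [Finset.sum_comm]
      apply Finset.sum_congr rfl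
      intro S _
      rw [Finset.sum_ite_mem, Finset.univ_inter, Finset.sum_const, nsmul_eq_mul]
    rw [hsplit]
    have hEi : ∀ i : Fin n, ∑ S : Finset (Fin n), (if i ∈ S then (kwP p S)^2 else 0)
        ≤ 2 ^ (n-1) * C := by
      intro i
      have hswap : ∑ S : Finset (Fin n), (if i ∈ S then (kwP p S)^2 else 0)
          = ∑ x, ∑ y, p x * p y *
            (eps x y i * ∏ j ∈ Finset.univ.erase i, (eps x y j + 1)) := by
        have h1 : ∀ S : Finset (Fin n), (if i ∈ S then (kwP p S)^2 else 0)
            = ∑ x, ∑ y, p x * p y * (if i ∈ S then ∏ j ∈ S, eps x y j else 0) := by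
          intro S
          by_cases hiS : i ∈ S
          · simp only [if_pos hiS]; exact hsq S
          · simp [hiS]
        rw [Finset.sum_congr rfl (fun S _ => h1 S), Finset.sum_comm]
        apply Finset.sum_congr rfl; intro x _
        rw [Finset.sum_comm]
        apply Finset.sum_congr rfl; intro y _
        rw [← Finset.mul_sum, kw_pick]
      rw [hswap]
      have hptwise : ∀ x y : Fin n → Bool,
          p x * p y * (eps x y i * ∏ j ∈ Finset.univ.erase i, (eps x y j + 1))
          ≤ p x * p y * (if x = y then (2:ℝ)^(n-1) else 0) := by
        intro x y
        apply mul_le_mul_of_nonneg_left _ (mul_nonneg (hp0 x) (hp0 y))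
        by_cases hxy : x = y
        · subst hxy
          rw [if_pos rfl]
          have h2 : ∀ j ∈ Finset.univ.erase i, eps x x j + 1 = 2 := by
            intro j _; norm_num [heps]
          rw [Finset.prod_congr rfl h2, Finset.prod_const]
          have : eps x x i = 1 := by simp [heps]
          rw [this, one_mul, Finset.card_erase_of_mem (Finset.mem_univ i)]
          simp
        · rw [if_neg hxy]
          have hne : ∃ j, x j ≠ y j := by
            by_contra h
            push_neg at h
            exact hxy (funext h)
          obtain ⟨j, hj⟩ := hne
          by_cases hji : j = i
          · subst hji
            have h3 : eps x y j = -1 := by simp [heps, hj]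
            rw [h3]
            have h4 : (0:ℝ) ≤ ∏ l ∈ Finset.univ.erase j, (eps x y l + 1) := by
              apply Finset.prod_nonneg
              intro l _
              by_cases h : x l = y l <;> simp [heps, h]
            nlinarith
          · have h5 : ∏ l ∈ Finset.univ.erase i, (eps x y l + 1) = 0 := by
              apply Finset.prod_eq_zero (Finset.mem_erase.mpr ⟨hji, Finset.mem_univ j⟩)
              simp [heps, hj]
            rw [h5, mul_zero]
      calc ∑ x, ∑ y, p x * p y *
            (eps x y i * ∏ j ∈ Finset.univ.erase i, (eps x y j + 1))
          ≤ ∑ x, ∑ y, p x * p y * (if x = y then (2:ℝ)^(n-1) else 0) := by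
            apply Finset.sum_le_sum; intro x _
            apply Finset.sum_le_sum; intro y _
            exact hptwise x y
        _ = 2 ^ (n-1) * C := by
            have : ∀ x : Fin n → Bool,
                ∑ y, p x * p y * (if x = y then (2:ℝ)^(n-1) else 0)
                = 2^(n-1) * (p x)^2 := by
              intro x
              have h6 : ∀ y : Fin n → Bool,
                  p x * p y * (if x = y then (2:ℝ)^(n-1) else 0)
                  = (if x = y then p x * p y * (2:ℝ)^(n-1) else 0) := by
                intro y; split_ifs <;> simp
              rw [Finset.sum_congr rfl (fun y _ => h6 y)]
              rw [Finset.sum_ite_eq (Finset.univ) x (fun y => p x * p y * 2^(n-1))]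
              simp [sq]; ring
            rw [Finset.sum_congr rfl (fun x _ => this x), ← Finset.mul_sum]
    calc ∑ i : Fin n, ∑ S : Finset (Fin n), (if i ∈ S then (kwP p S)^2 else 0)
        ≤ ∑ i : Fin n, (2:ℝ) ^ (n-1) * C := Finset.sum_le_sum (fun i _ => hEi i)
      _ = (n : ℝ) * (2 ^ (n-1) * C) := by rw [Finset.sum_const]; simp
      _ = (m : ℝ) * (2 ^ n * C) := by
          have h2n : (2:ℝ) ^ n = 2 ^ (n-1) * 2 := by
            rw [← pow_succ]
            congr 1
            omega
          have hn2 : (n : ℝ) = 2 * m := by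
            have : (2 * m : ℕ) = n := by omega
            rw [← this]; push_cast; ring
          rw [h2n, hn2]; ring
  -- P of empty set
  have hPempty : kwP p ∅ = 1 := by
    rw [kwP]
    simp [kwChi, hp1]
  -- main inequality : 2^n * C ≤ m + 1
  have main : 2 ^ n * C ≤ (m : ℝ) + 1 := by
    have hterm : ∀ S : Finset (Fin n),
        ((m : ℝ) + 1 - S.card) * (kwP p S) ^ 2
        ≤ (if S = ∅ then (m : ℝ) + 1 else 0) := by
      intro S
      by_cases hS : S = ∅
      · subst hS
        rw [if_pos rfl, hPempty]
        simp
      · rw [if_neg hS]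
        by_cases hcard : S.card ≤ m
        · rw [kw_vanish p m hindep S (Finset.nonempty_of_ne_empty hS) hcard]
          simp
        · push_neg at hcard
          apply mul_nonpos_of_nonpos_of_nonneg _ (sq_nonneg _)
          have : (m : ℝ) + 1 ≤ S.card := by
            exact_mod_cast Nat.succ_le_of_lt hcard
          linarith
    have hsum : ∑ S : Finset (Fin n), ((m : ℝ) + 1 - S.card) * (kwP p S) ^ 2
        ≤ (m : ℝ) + 1 := by
      calc ∑ S : Finset (Fin n), ((m : ℝ) + 1 - S.card) * (kwP p S) ^ 2
          ≤ ∑ S : Finset (Fin n), (if S = ∅ then (m : ℝ) + 1 else 0) :=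
            Finset.sum_le_sum (fun S _ => hterm S)
        _ = (m : ℝ) + 1 := by
            rw [Finset.sum_ite_eq' (Finset.univ) ∅ (fun _ => (m : ℝ) + 1)]
            simp
    have hexpand : ∑ S : Finset (Fin n), ((m : ℝ) + 1 - S.card) * (kwP p S) ^ 2
        = ((m : ℝ) + 1) * (2 ^ n * C)
          - ∑ S : Finset (Fin n), (S.card : ℝ) * (kwP p S) ^ 2 := by
      rw [← parseval, Finset.mul_sum, ← Finset.sum_sub_distrib]
      apply Finset.sum_congr rfl
      intro S _
      ring
    nlinarith [degbound, hsum, hexpand]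
  -- Cauchy-Schwarz
  set A := Finset.univ.filter fun x => 0 < p x with hA
  have hsupp : ∑ x ∈ A, p x = 1 := by
    rw [← hp1]
    apply Finset.sum_subset (Finset.filter_subset _ _)
    intro x _ hx
    rw [Finset.mem_filter] at hx
    push_neg at hx
    have := hx (Finset.mem_univ x)
    have := hp0 x
    linarith
  have hCS : (1 : ℝ) ≤ (A.card : ℝ) * C := by
    have h1 : (∑ x ∈ A, (1:ℝ) * p x) ^ 2 ≤ (∑ x ∈ A, (1:ℝ)^2) * ∑ x ∈ A, (p x)^2 :=
      Finset.sum_mul_sq_le_sq_mul_sq A _ _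
    have h2 : ∑ x ∈ A, (1:ℝ) * p x = 1 := by
      simp_rw [one_mul]; exact hsupp
    have h3 : ∑ x ∈ A, ((1:ℝ))^2 = (A.card : ℝ) := by simp
    have h4 : ∑ x ∈ A, (p x)^2 ≤ C := by
      apply Finset.sum_le_sum_of_subset_of_nonneg (Finset.filter_subset _ _)
      intro x _ _
      exact sq_nonneg _
    rw [h2, h3] at h1
    have hcn : (0:ℝ) ≤ (A.card : ℝ) := Nat.cast_nonneg _
    nlinarith
  -- conclude
  have hm1 : (m : ℝ) + 1 ≤ (n : ℝ) + 1 := by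
    have : m ≤ n := Nat.div_le_self n 2
    exact_mod_cast Nat.succ_le_succ this
  have hfinal : (2:ℝ) ^ n ≤ (A.card : ℝ) * ((n:ℝ) + 1) := by
    have hcard0 : (0:ℝ) ≤ (A.card : ℝ) := Nat.cast_nonneg _
    calc (2:ℝ) ^ n = 2 ^ n * 1 := (mul_one _).symm
      _ ≤ 2 ^ n * ((A.card : ℝ) * C) := by
          apply mul_le_mul_of_nonneg_left hCS (by positivity)
      _ = (A.card : ℝ) * (2 ^ n * C) := by ring
      _ ≤ (A.card : ℝ) * ((m : ℝ) + 1) := by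
          apply mul_le_mul_of_nonneg_left main hcard0
      _ ≤ (A.card : ℝ) * ((n : ℝ) + 1) := by
          apply mul_le_mul_of_nonneg_left hm1 hcard0
  rw [ge_iff_le, div_le_iff₀ (by positivity : (0:ℝ) < (n:ℝ) + 1)]
  linarith
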